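/- The 24 points of S³ consisting of the 16 points ((1/√2)u ; (1/√2)v) with u, v ∈ {(±1,0),(0,±1)} scaled by 1/√2 as above, together with the 8 points (0,0,±1/√2,±1/√2) and (±1/√2,±1/√2,0,0), have pairwise Euclidean distance at least 1. -/

import Mathlib

open Real

noncomputable def vec4 (a b c d : ℝ) : EuclideanSpace ℝ (Fin 4) :=
  (WithLp.equiv 2 (Fin 4 → ℝ)).symm ![a, b, c, d]

def biorth : Set (ℝ × ℝ) :=
  {(1, 0), (-1, 0), (0, 1), (0, -1)}

/-- The 24-point code: the 16 biorthogonal-product points together with the 8 points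
`(0,0,±1/√2,±1/√2)` and `(±1/√2,±1/√2,0,0)`. -/
noncomputable def code24 : Set (EuclideanSpace ℝ (Fin 4)) :=
  {x | ∃ u ∈ biorth, ∃ v ∈ biorth,
      x = vec4 (u.1 / Real.sqrt 2) (u.2 / Real.sqrt 2) (v.1 / Real.sqrt 2) (v.2 / Real.sqrt 2)} ∪
  {x | ∃ s ∈ ({1, -1} : Set ℝ), ∃ t ∈ ({1, -1} : Set ℝ),
      x = vec4 0 0 (s / Real.sqrt 2) (t / Real.sqrt 2) ∨
      x = vec4 (s / Real.sqrt 2) (t / Real.sqrt 2) 0 0}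

lemma dist_vec4 (a b c d a' b' c' d' : ℝ) :
    dist (vec4 a b c d) (vec4 a' b' c' d') =
      Real.sqrt ((a-a')^2+(b-b')^2+(c-c')^2+(d-d')^2) := by
  rw [EuclideanSpace.dist_eq]
  simp [vec4, Fin.sum_univ_four, Real.dist_eq, sq_abs]

lemma norm_vec4 (a b c d : ℝ) :
    ‖vec4 a b c d‖ = Real.sqrt (a^2+b^2+c^2+d^2) := by
  rw [EuclideanSpace.norm_eq]
  simp [vec4, Fin.sum_univ_four, sq_abs]

lemma key (a b c d a' b' c' d' : ℤ)
    (h1 : a^2+b^2+c^2+d^2 = 2) (h2 : a'^2+b'^2+c'^2+d'^2 = 2)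
    (hne : vec4 ((a:ℝ)/Real.sqrt 2) (b/Real.sqrt 2) (c/Real.sqrt 2) (d/Real.sqrt 2) ≠
      vec4 ((a':ℝ)/Real.sqrt 2) (b'/Real.sqrt 2) (c'/Real.sqrt 2) (d'/Real.sqrt 2)) :
    1 ≤ dist (vec4 ((a:ℝ)/Real.sqrt 2) (b/Real.sqrt 2) (c/Real.sqrt 2) (d/Real.sqrt 2))
      (vec4 ((a':ℝ)/Real.sqrt 2) (b'/Real.sqrt 2) (c'/Real.sqrt 2) (d'/Real.sqrt 2)) := by
  set n : ℤ := (a-a')^2+(b-b')^2+(c-c')^2+(d-d')^2 with hn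
  have hn0 : n ≠ 0 := by
    intro h
    apply hne
    have ha : a = a' := by nlinarith [sq_nonneg (a-a'), sq_nonneg (b-b'), sq_nonneg (c-c'), sq_nonneg (d-d')]
    have hb : b = b' := by nlinarith [sq_nonneg (a-a'), sq_nonneg (b-b'), sq_nonneg (c-c'), sq_nonneg (d-d')]
    have hc : c = c' := by nlinarith [sq_nonneg (a-a'), sq_nonneg (b-b'), sq_nonneg (c-c'), sq_nonneg (d-d')]
    have hd : d = d' := by nlinarith [sq_nonneg (a-a'), sq_nonneg (b-b'), sq_nonneg (c-c'), sq_nonneg (d-d')]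
    rw [ha, hb, hc, hd]
  have hpar : n = 4 - 2*(a*a'+b*b'+c*c'+d*d') := by rw [hn]; nlinarith
  have hge : 2 ≤ n := by
    have hnn : 0 ≤ n := by positivity
    omega
  rw [dist_vec4]
  have hsum : ((a:ℝ)/Real.sqrt 2 - a'/Real.sqrt 2)^2 + ((b:ℝ)/Real.sqrt 2 - b'/Real.sqrt 2)^2
      + ((c:ℝ)/Real.sqrt 2 - c'/Real.sqrt 2)^2 + ((d:ℝ)/Real.sqrt 2 - d'/Real.sqrt 2)^2
      = (n:ℝ) / 2 := by
    have hs : Real.sqrt 2 ^ 2 = 2 := Real.sq_sqrt (by norm_num)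
    have h2pos : (0:ℝ) < Real.sqrt 2 := by positivity
    field_simp
    push_cast [hn]
    ring_nf; rw [hs]; ring
  rw [hsum]
  rw [show (1:ℝ) = Real.sqrt 1 from (Real.sqrt_one).symm]
  apply Real.sqrt_le_sqrt
  have : (2:ℝ) ≤ (n:ℝ) := by exact_mod_cast hge
  linarith

lemma code_form (x : EuclideanSpace ℝ (Fin 4)) (hx : x ∈ code24) :
    ∃ a b c d : ℤ, a^2+b^2+c^2+d^2 = 2 ∧
      x = vec4 ((a:ℝ)/Real.sqrt 2) (b/Real.sqrt 2) (c/Real.sqrt 2) (d/Real.sqrt 2) := by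
  rcases hx with ⟨u, hu, v, hv, rfl⟩ | ⟨s, hs, t, ht, rfl | rfl⟩
  · simp only [biorth, Set.mem_insert_iff, Set.mem_singleton_iff] at hu hv
    rcases hu with rfl|rfl|rfl|rfl <;> rcases hv with rfl|rfl|rfl|rfl
    · exact ⟨1, 0, 1, 0, by norm_num, by push_cast; norm_num⟩
    · exact ⟨1, 0, -1, 0, by norm_num, by push_cast; norm_num⟩
    · exact ⟨1, 0, 0, 1, by norm_num, by push_cast; norm_num⟩
    · exact ⟨1, 0, 0, -1, by norm_num, by push_cast; norm_num⟩
    · exact ⟨-1, 0, 1, 0, by norm_num, by push_cast; norm_num⟩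
    · exact ⟨-1, 0, -1, 0, by norm_num, by push_cast; norm_num⟩
    · exact ⟨-1, 0, 0, 1, by norm_num, by push_cast; norm_num⟩
    · exact ⟨-1, 0, 0, -1, by norm_num, by push_cast; norm_num⟩
    · exact ⟨0, 1, 1, 0, by norm_num, by push_cast; norm_num⟩
    · exact ⟨0, 1, -1, 0, by norm_num, by push_cast; norm_num⟩
    · exact ⟨0, 1, 0, 1, by norm_num, by push_cast; norm_num⟩
    · exact ⟨0, 1, 0, -1, by norm_num, by push_cast; norm_num⟩
    · exact ⟨0, -1, 1, 0, by norm_num, by push_cast; norm_num⟩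
    · exact ⟨0, -1, -1, 0, by norm_num, by push_cast; norm_num⟩
    · exact ⟨0, -1, 0, 1, by norm_num, by push_cast; norm_num⟩
    · exact ⟨0, -1, 0, -1, by norm_num, by push_cast; norm_num⟩
  · simp only [Set.mem_insert_iff, Set.mem_singleton_iff] at hs ht
    rcases hs with rfl|rfl <;> rcases ht with rfl|rfl
    · exact ⟨0, 0, 1, 1, by norm_num, by push_cast; norm_num⟩
    · exact ⟨0, 0, 1, -1, by norm_num, by push_cast; norm_num⟩
    · exact ⟨0, 0, -1, 1, by norm_num, by push_cast; norm_num⟩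
    · exact ⟨0, 0, -1, -1, by norm_num, by push_cast; norm_num⟩
  · simp only [Set.mem_insert_iff, Set.mem_singleton_iff] at hs ht
    rcases hs with rfl|rfl <;> rcases ht with rfl|rfl
    · exact ⟨1, 1, 0, 0, by norm_num, by push_cast; norm_num⟩
    · exact ⟨1, -1, 0, 0, by norm_num, by push_cast; norm_num⟩
    · exact ⟨-1, 1, 0, 0, by norm_num, by push_cast; norm_num⟩
    · exact ⟨-1, -1, 0, 0, by norm_num, by push_cast; norm_num⟩

/-- The 24 points lie on `S³` and have pairwise distance at least 1. -/
theorem stmt12 :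
    (∀ x ∈ code24, ‖x‖ = 1) ∧
    (∀ x ∈ code24, ∀ y ∈ code24, x ≠ y → 1 ≤ dist x y) := by
  constructor
  · intro x hx
    obtain ⟨a, b, c, d, hsum, rfl⟩ := code_form x hx
    rw [norm_vec4]
    have hs : Real.sqrt 2 ^ 2 = 2 := Real.sq_sqrt (by norm_num)
    have h2pos : (0:ℝ) < Real.sqrt 2 := by positivity
    have : ((a:ℝ)/Real.sqrt 2)^2 + ((b:ℝ)/Real.sqrt 2)^2 + ((c:ℝ)/Real.sqrt 2)^2
        + ((d:ℝ)/Real.sqrt 2)^2 = 1 := by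
      have : ((a:ℝ)^2+b^2+c^2+d^2) = 2 := by exact_mod_cast congrArg (Int.cast : ℤ → ℝ) hsum
      field_simp
      linarith
    rw [this, Real.sqrt_one]
  · intro x hx y hy hxy
    obtain ⟨a, b, c, d, h1, rfl⟩ := code_form x hx
    obtain ⟨a', b', c', d', h2, rfl⟩ := code_form y hy
    exact key a b c d a' b' c' d' h1 h2 hxy
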